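/- Let E be a nonzero finite-dimensional complex Hilbert space, U a unitary operator on E and P an orthogonal projection on E, and let W_Φ, W_Ψ be the commuting isometries on ℓ²(ℕ, E) with symbols Φ(z) = (P + z(I−P)) U* and Ψ(z) = U((I−P) + z P). Then for every finitely supported function c : ℕ × ℕ → ℂ, ‖∑_{(i,j)} c(i,j) W_Φ^i W_Ψ^j‖ ≤ sup_{z ∈ ℂ, |z| = 1} ‖∑_{(i,j)} c(i,j) Φ(z)^i Ψ(z)^j‖. -/

import Mathlib

open ContinuousLinearMap Polynomial Finset Complex intervalIntegral Filter
open scoped ENNReal Real Topology ComplexConjugate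

set_option linter.unusedSectionVars false
set_option linter.unusedVariables false
set_option maxHeartbeats 1000000

noncomputable section

/-- `W` is the analytic (degree-one) Toeplitz operator on `ℓ²(ℕ, E)` with symbol
`φ(z) = a + z b`, i.e. `(W f)(0) = a (f 0)` and `(W f)(n) = a (f n) + b (f (n-1))`
for `n ≥ 1`. -/
def IsToeplitz {E : Type*} [NormedAddCommGroup E] [InnerProductSpace ℂ E]
    (a b : E →L[ℂ] E)
    (W : lp (fun _ : ℕ => E) 2 →L[ℂ] lp (fun _ : ℕ => E) 2) : Prop :=
  ∀ f : lp (fun _ : ℕ => E) 2,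
    (W f : ∀ _ : ℕ, E) 0 = a ((f : ∀ _ : ℕ, E) 0) ∧
    ∀ n : ℕ, (W f : ∀ _ : ℕ, E) (n + 1) =
      a ((f : ∀ _ : ℕ, E) (n + 1)) + b ((f : ∀ _ : ℕ, E) n)

section S1


variable {E : Type*} [NormedAddCommGroup E] [InnerProductSpace ℂ E]

/-- triangle reindexing -/
theorem tri_sum {M : Type*} [AddCommMonoid M] (g : ℕ → ℕ → M) (n : ℕ) :
    ∑ m ∈ range (n + 1), ∑ a ∈ range (m + 1), g a (m - a)
      = ∑ k ∈ range (n + 1), ∑ j ∈ range (n + 1 - k), g k j := by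
  induction n with
  | zero => simp
  | succ n ih =>
    rw [Finset.sum_range_succ, ih, Finset.sum_range_succ (fun k => ∑ j ∈ range (n + 1 + 1 - k), g k j) (n + 1)]
    simp only [Nat.add_sub_cancel_left, Finset.sum_range_one]
    rw [Finset.sum_range_succ (fun a => g a (n + 1 - a)) (n + 1)]
    simp only [Nat.sub_self]
    have h1 : ∀ k ∈ range (n + 1), ∑ j ∈ range (n + 1 + 1 - k), g k j
        = (∑ j ∈ range (n + 1 - k), g k j) + g k (n + 1 - k) := by
      intro k hk
      rw [Finset.mem_range] at hk
      have : n + 1 + 1 - k = (n + 1 - k) + 1 := by omega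
      rw [this, Finset.sum_range_succ]
    rw [Finset.sum_congr rfl h1, Finset.sum_add_distrib]
    abel

def ToepRep (p : Polynomial (E →L[ℂ] E))
    (W : lp (fun _ : ℕ => E) 2 →L[ℂ] lp (fun _ : ℕ => E) 2) : Prop :=
  ∀ f : lp (fun _ : ℕ => E) 2, ∀ n : ℕ,
    (W f : ∀ _ : ℕ, E) n = ∑ k ∈ range (n + 1), p.coeff k ((f : ∀ _ : ℕ, E) (n - k))

theorem toeprep_one : ToepRep (1 : Polynomial (E →L[ℂ] E)) 1 := by
  intro f n
  rw [Finset.sum_eq_single 0]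
  · simp
  · intro k hk hk0
    simp [Polynomial.coeff_one, hk0]
  · simp

theorem toeprep_add {p q : Polynomial (E →L[ℂ] E)} {W₁ W₂}
    (hp : ToepRep p W₁) (hq : ToepRep q W₂) : ToepRep (p + q) (W₁ + W₂) := by
  intro f n
  have : ((W₁ + W₂) f : ∀ _ : ℕ, E) n = (W₁ f : ∀ _ : ℕ, E) n + (W₂ f : ∀ _ : ℕ, E) n := by
    rw [ContinuousLinearMap.add_apply, lp.coeFn_add]; rfl
  rw [this, hp f n, hq f n, ← Finset.sum_add_distrib]
  simp [Polynomial.coeff_add]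

theorem toeprep_smul {p : Polynomial (E →L[ℂ] E)} {W} (c : ℂ)
    (hp : ToepRep p W) : ToepRep (c • p) (c • W) := by
  intro f n
  have : ((c • W) f : ∀ _ : ℕ, E) n = c • (W f : ∀ _ : ℕ, E) n := by
    rw [ContinuousLinearMap.smul_apply, lp.coeFn_smul]; rfl
  rw [this, hp f n, Finset.smul_sum]
  simp [Polynomial.coeff_smul]

theorem toeprep_zero : ToepRep (0 : Polynomial (E →L[ℂ] E)) 0 := by
  intro f n
  simp only [Polynomial.coeff_zero, ContinuousLinearMap.zero_apply, Finset.sum_const_zero,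
    ContinuousLinearMap.zero_apply]
  rfl

theorem toeprep_mul {p q : Polynomial (E →L[ℂ] E)} {W₁ W₂}
    (hp : ToepRep p W₁) (hq : ToepRep q W₂) : ToepRep (p * q) (W₁ * W₂) := by
  intro f n
  have h1 : ((W₁ * W₂) f : ∀ _ : ℕ, E) n = (W₁ (W₂ f) : ∀ _ : ℕ, E) n := rfl
  rw [h1, hp (W₂ f) n]
  have h2 : ∀ k ∈ range (n + 1), p.coeff k ((W₂ f : ∀ _ : ℕ, E) (n - k))
      = ∑ j ∈ range (n + 1 - k), p.coeff k (q.coeff j ((f : ∀ _ : ℕ, E) (n - k - j))) := by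
    intro k hk
    rw [Finset.mem_range] at hk
    rw [hq f (n - k), map_sum]
    have : n - k + 1 = n + 1 - k := by omega
    rw [this]
  rw [Finset.sum_congr rfl h2, ← tri_sum (fun a b => p.coeff a (q.coeff b ((f : ∀ _ : ℕ, E) (n - a - b)))) n]
  refine Finset.sum_congr rfl fun m hm => ?_
  rw [Finset.mem_range] at hm
  rw [Polynomial.coeff_mul, Finset.Nat.sum_antidiagonal_eq_sum_range_succ_mk,
    ContinuousLinearMap.sum_apply]
  refine Finset.sum_congr rfl fun a ha => ?_
  rw [Finset.mem_range] at ha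
  have : n - a - (m - a) = n - m := by omega
  rw [this]; rfl

theorem toeprep_pow {p : Polynomial (E →L[ℂ] E)} {W} (hp : ToepRep p W) (i : ℕ) :
    ToepRep (p ^ i) (W ^ i) := by
  induction i with
  | zero => simpa using toeprep_one
  | succ i ih => rw [pow_succ, pow_succ]; exact toeprep_mul ih hp

theorem toeprep_finset_sum {ι : Type*} (s : Finset ι) (p : ι → Polynomial (E →L[ℂ] E))
    (W : ι → lp (fun _ : ℕ => E) 2 →L[ℂ] lp (fun _ : ℕ => E) 2)
    (h : ∀ i ∈ s, ToepRep (p i) (W i)) :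
    ToepRep (∑ i ∈ s, p i) (∑ i ∈ s, W i) := by
  classical
  induction s using Finset.induction_on with
  | empty => simpa using toeprep_zero
  | insert _ _ hni ih =>
    rw [Finset.sum_insert hni, Finset.sum_insert hni]
    exact toeprep_add (h _ (Finset.mem_insert_self _ _))
      (ih fun i hi => h i (Finset.mem_insert_of_mem hi))

end S1

section S2


variable {E : Type*} [NormedAddCommGroup E] [InnerProductSpace ℂ E] [CompleteSpace E]

theorem commute_smul_one (a : E →L[ℂ] E) (z : ℂ) : Commute a (z • (1 : E →L[ℂ] E)) := by
  unfold Commute SemiconjBy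
  rw [mul_smul_comm, smul_mul_assoc, mul_one, one_mul]

/-- evaluation of an operator polynomial at the central element `z • 1` -/
def symb (z : ℂ) : Polynomial (E →L[ℂ] E) →+* (E →L[ℂ] E) :=
  Polynomial.eval₂RingHom' (RingHom.id _) (z • (1 : E →L[ℂ] E))
    (fun a => commute_smul_one a z)

theorem symb_smul (z : ℂ) (c : ℂ) (p : Polynomial (E →L[ℂ] E)) :
    symb z (c • p) = c • symb z p := by
  have h : c • p = Polynomial.C (c • (1 : E →L[ℂ] E)) * p := by
    ext n
    rw [Polynomial.coeff_smul, Polynomial.coeff_C_mul, smul_mul_assoc, one_mul]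
  rw [h, map_mul]
  have h2 : symb z (Polynomial.C (c • (1 : E →L[ℂ] E))) = c • 1 := by
    simp [symb]
  rw [h2, smul_mul_assoc, one_mul]

theorem symb_eq_sum (z : ℂ) (p : Polynomial (E →L[ℂ] E)) :
    symb z p = ∑ k ∈ range (p.natDegree + 1), z ^ k • p.coeff k := by
  have : symb z p = Polynomial.eval₂ (RingHom.id _) (z • (1 : E →L[ℂ] E)) p := rfl
  rw [this, Polynomial.eval₂_eq_sum_range]
  refine Finset.sum_congr rfl fun k _ => ?_
  rw [_root_.smul_pow, one_pow, RingHom.id_apply, mul_smul_comm, mul_one]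

theorem symb_linear (z : ℂ) (a b : E →L[ℂ] E) :
    symb z (Polynomial.C a + Polynomial.C b * Polynomial.X) = a + z • b := by
  rw [map_add, map_mul]
  have hX : symb z (Polynomial.X : Polynomial (E →L[ℂ] E)) = z • 1 := by
    simp [symb]
  have hC : ∀ u : E →L[ℂ] E, symb z (Polynomial.C u) = u := by
    intro u; simp [symb]
  rw [hX, hC, hC, mul_smul_comm, mul_one]

theorem norm_symb_le (z : ℂ) (hz : ‖z‖ = 1) (p : Polynomial (E →L[ℂ] E)) :
    ‖symb z p‖ ≤ ∑ k ∈ range (p.natDegree + 1), ‖p.coeff k‖ := by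
  rw [symb_eq_sum]
  refine (norm_sum_le _ _).trans (Finset.sum_le_sum fun k _ => ?_)
  rw [norm_smul, norm_pow, hz, one_pow, one_mul]

theorem bdd_symb (p : Polynomial (E →L[ℂ] E)) :
    BddAbove (Set.range fun z : {w : ℂ // ‖w‖ = 1} => ‖symb (z : ℂ) p‖) := by
  refine ⟨∑ k ∈ range (p.natDegree + 1), ‖p.coeff k‖, ?_⟩
  rintro x ⟨z, rfl⟩
  exact norm_symb_le z z.2 p

end S2

section S3


variable {E : Type*} [NormedAddCommGroup E] [InnerProductSpace ℂ E]

local notation "⟪" x ", " y "⟫" => @inner ℂ _ _ x y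

theorem exp_ortho (m n : ℕ) :
    (∫ θ in (0:ℝ)..(2*π), Complex.exp (((n:ℂ) - m) * θ * Complex.I))
      = if n = m then (2*π : ℂ) else 0 := by
  by_cases h : n = m
  · subst h
    simp only [sub_self, zero_mul, Complex.exp_zero, if_pos rfl]
    rw [intervalIntegral.integral_const]
    simp [Complex.real_smul]
  · rw [if_neg h]
    have hc : ((n:ℂ) - m) * Complex.I ≠ 0 := by
      apply mul_ne_zero
      · rw [sub_ne_zero]
        exact_mod_cast fun hh => h (by exact_mod_cast hh)
      · exact Complex.I_ne_zero
    have heq : ∀ θ : ℝ, ((n:ℂ) - m) * θ * Complex.I = (((n:ℂ) - m) * Complex.I) * θ := by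
      intro θ; ring
    simp only [heq]
    rw [integral_exp_mul_complex hc]
    have h1 : (((n:ℂ) - m) * Complex.I) * ((2*π : ℝ) : ℂ) = ((((n:ℤ) - (m:ℤ)) : ℤ) : ℂ) * (2 * (π:ℂ) * Complex.I) := by
      push_cast; ring
    rw [h1, Complex.exp_int_mul_two_pi_mul_I]
    simp

theorem cont_term (m n : ℕ) (c : ℂ) :
    Continuous fun θ : ℝ => Complex.exp (((n:ℂ) - m) * θ * Complex.I) * c := by
  apply Continuous.mul _ continuous_const
  apply Complex.continuous_exp.comp
  exact (continuous_const.mul Complex.continuous_ofReal).mul continuous_const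

theorem parseval (N : ℕ) (v : ℕ → E) :
    (∫ θ in (0:ℝ)..(2*π),
        (‖∑ n ∈ range N, Complex.exp ((n:ℂ) * (θ:ℂ) * Complex.I) • v n‖^2 : ℝ))
      = 2 * π * ∑ n ∈ range N, ‖v n‖^2 := by
  set g : ℝ → E := fun θ => ∑ n ∈ range N, Complex.exp ((n:ℂ) * (θ:ℂ) * Complex.I) • v n with hg
  have expand : ∀ θ : ℝ, ((‖g θ‖^2 : ℝ) : ℂ)
      = ∑ m ∈ range N, ∑ n ∈ range N,
          Complex.exp (((n:ℂ) - m) * θ * Complex.I) * ⟪v m, v n⟫ := by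
    intro θ
    have h0 : ((‖g θ‖^2 : ℝ) : ℂ) = ⟪g θ, g θ⟫ := by
      rw [inner_self_eq_norm_sq_to_K]; norm_cast
    rw [h0, hg, sum_inner]
    refine Finset.sum_congr rfl fun m _ => ?_
    rw [inner_sum]
    refine Finset.sum_congr rfl fun n _ => ?_
    rw [inner_smul_left, inner_smul_right, ← mul_assoc]
    congr 1
    rw [← Complex.exp_conj, ← Complex.exp_add]
    congr 1
    simp only [map_mul, Complex.conj_I, Complex.conj_ofReal, map_natCast]
    ring
  have key : (∫ θ in (0:ℝ)..(2*π), ((‖g θ‖^2 : ℝ) : ℂ))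
      = ((2 * π * ∑ n ∈ range N, ‖v n‖^2 : ℝ) : ℂ) := by
    simp only [expand]
    rw [intervalIntegral.integral_finset_sum]
    · have h1 : ∀ m ∈ range N,
          (∫ θ in (0:ℝ)..(2*π), ∑ n ∈ range N,
            Complex.exp (((n:ℂ) - m) * θ * Complex.I) * ⟪v m, v n⟫)
          = ∑ n ∈ range N, (if n = m then (2*π:ℂ) else 0) * ⟪v m, v n⟫ := by
        intro m _
        rw [intervalIntegral.integral_finset_sum]
        · refine Finset.sum_congr rfl fun n _ => ?_
          rw [intervalIntegral.integral_mul_const, exp_ortho]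
        · intro n _
          exact (cont_term m n _).intervalIntegrable _ _
      rw [Finset.sum_congr rfl h1]
      have h2 : ∀ m ∈ range N,
          (∑ n ∈ range N, (if n = m then (2*π:ℂ) else 0) * ⟪v m, v n⟫)
            = (2*π:ℂ) * ⟪v m, v m⟫ := by
        intro m hm
        rw [Finset.sum_eq_single m]
        · simp
        · intro n _ hnm; rw [if_neg hnm, zero_mul]
        · intro hmm; exact absurd hm hmm
      rw [Finset.sum_congr rfl h2]
      push_cast
      rw [Finset.mul_sum]
      refine Finset.sum_congr rfl fun m _ => ?_
      rw [inner_self_eq_norm_sq_to_K]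
      norm_cast
      simp [Complex.ofReal_mul, Complex.coe_algebraMap]
    · intro m _
      apply Continuous.intervalIntegrable
      exact continuous_finset_sum _ fun n _ => cont_term m n _
  have hre : (∫ θ in (0:ℝ)..(2*π), ((‖g θ‖^2 : ℝ) : ℂ))
      = Complex.ofReal (∫ θ in (0:ℝ)..(2*π), (‖g θ‖^2 : ℝ)) := intervalIntegral.integral_ofReal
  rw [hre] at key
  exact Complex.ofReal_injective key

end S3

section S4


variable {E : Type*} [NormedAddCommGroup E] [InnerProductSpace ℂ E] [CompleteSpace E]

theorem lp_norm_sq (x : lp (fun _ : ℕ => E) 2) (N : ℕ)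
    (h : ∀ n, N ≤ n → (x : ∀ _ : ℕ, E) n = 0) :
    ‖x‖ ^ 2 = ∑ n ∈ range N, ‖(x : ∀ _ : ℕ, E) n‖ ^ 2 := by
  have h2 : (0:ℝ) < (2:ℝ≥0∞).toReal := by simp
  have key := lp.norm_rpow_eq_tsum h2 x
  have hz : ∀ n ∉ range N, ‖(x : ∀ _ : ℕ, E) n‖ ^ ((2:ℝ≥0∞).toReal) = 0 := by
    intro n hn
    rw [Finset.mem_range, not_lt] at hn
    rw [h n hn, norm_zero]
    exact Real.zero_rpow (by simp)
  rw [tsum_eq_sum hz] at key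
  have hconv : ∀ y : ℝ, 0 ≤ y → y ^ ((2:ℝ≥0∞).toReal) = y ^ 2 := by
    intro y hy
    rw [show ((2:ℝ≥0∞).toReal) = ((2:ℕ):ℝ) by simp, Real.rpow_natCast]
  calc ‖x‖ ^ 2 = ‖x‖ ^ ((2:ℝ≥0∞).toReal) := (hconv _ (norm_nonneg _)).symm
    _ = ∑ n ∈ range N, ‖(x : ∀ _ : ℕ, E) n‖ ^ ((2:ℝ≥0∞).toReal) := key
    _ = ∑ n ∈ range N, ‖(x : ∀ _ : ℕ, E) n‖ ^ 2 :=
        Finset.sum_congr rfl fun n _ => hconv _ (norm_nonneg _)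

theorem key_identity (p : Polynomial (E →L[ℂ] E)) (z : ℂ) (N : ℕ) (u : ℕ → E)
    (hu : ∀ n, N ≤ n → u n = 0) :
    ∑ n ∈ range (N + (p.natDegree + 1)),
        z ^ n • (∑ k ∈ range (n + 1), p.coeff k (u (n - k)))
      = symb z p (∑ m ∈ range N, z ^ m • u m) := by
  have L1 : ∀ n ∈ range (N + (p.natDegree + 1)),
      z ^ n • (∑ k ∈ range (n + 1), p.coeff k (u (n - k)))
        = ∑ k ∈ range (n + 1), z ^ (k + (n - k)) • p.coeff k (u (n - k)) := by
    intro n _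
    rw [Finset.smul_sum]
    refine Finset.sum_congr rfl fun k hk => ?_
    rw [Finset.mem_range] at hk
    have hkn : k + (n - k) = n := by omega
    rw [hkn]
  rw [Finset.sum_congr rfl L1]
  have hNd : N + (p.natDegree + 1) = (N + p.natDegree) + 1 := by omega
  rw [hNd, tri_sum (fun a b => z ^ (a + b) • p.coeff a (u b)) (N + p.natDegree)]
  -- restrict outer sum to range (natDegree+1)
  rw [← Finset.sum_subset (Finset.range_subset_range.2 (by omega : p.natDegree + 1 ≤ N + p.natDegree + 1))
    (fun k hk hk2 => ?_)]
  swap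
  · apply Finset.sum_eq_zero
    intro j _
    rw [Finset.mem_range, not_lt] at hk2
    rw [Polynomial.coeff_eq_zero_of_natDegree_lt (by omega), ContinuousLinearMap.zero_apply,
      smul_zero]
  -- restrict inner sums to range N
  have L2 : ∀ k ∈ range (p.natDegree + 1),
      (∑ j ∈ range (N + p.natDegree + 1 - k), z ^ (k + j) • p.coeff k (u j))
        = ∑ j ∈ range N, z ^ (k + j) • p.coeff k (u j) := by
    intro k hk
    rw [Finset.mem_range] at hk
    rw [← Finset.sum_subset (Finset.range_subset_range.2 (by omega : N ≤ N + p.natDegree + 1 - k))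
      (fun j hj hj2 => ?_)]
    rw [Finset.mem_range, not_lt] at hj2
    rw [hu j hj2, map_zero, smul_zero]
  rw [Finset.sum_congr rfl L2, symb_eq_sum, ContinuousLinearMap.sum_apply]
  refine Finset.sum_congr rfl fun k _ => ?_
  rw [ContinuousLinearMap.smul_apply, map_sum, Finset.smul_sum]
  refine Finset.sum_congr rfl fun j _ => ?_
  rw [map_smul, pow_add, mul_smul]

theorem norm_apply_le_of_finsupp (p : Polynomial (E →L[ℂ] E)) (W)
    (hW : ToepRep p W) (M : ℝ) (hM0 : 0 ≤ M)
    (hM : ∀ z : ℂ, ‖z‖ = 1 → ‖symb z p‖ ≤ M)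
    (f : lp (fun _ : ℕ => E) 2) (N : ℕ)
    (hf : ∀ n, N ≤ n → (f : ∀ _ : ℕ, E) n = 0) :
    ‖W f‖ ≤ M * ‖f‖ := by
  set d := p.natDegree + 1 with hd
  have hWf0 : ∀ n, N + d ≤ n → (W f : ∀ _ : ℕ, E) n = 0 := by
    intro n hn
    rw [hW f n]
    apply Finset.sum_eq_zero
    intro k hk
    rw [Finset.mem_range] at hk
    by_cases hkd : p.natDegree < k
    · rw [Polynomial.coeff_eq_zero_of_natDegree_lt hkd, ContinuousLinearMap.zero_apply]
    · push_neg at hkd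
      rw [hf (n - k) (by omega), map_zero]
  have hWsq := lp_norm_sq (W f) (N + d) hWf0
  have hfsq := lp_norm_sq f N hf
  have par1 := parseval (N + d) (fun n => (W f : ∀ _ : ℕ, E) n)
  have par2 := parseval N (fun n => (f : ∀ _ : ℕ, E) n)
  have hzexp : ∀ θ : ℝ, ‖Complex.exp ((θ:ℂ) * Complex.I)‖ = 1 := by
    intro θ
    exact Complex.norm_exp_ofReal_mul_I θ
  have hpoint : ∀ θ : ℝ,
      (∑ n ∈ range (N + d), Complex.exp ((n:ℂ) * (θ:ℂ) * Complex.I) • (W f : ∀ _ : ℕ, E) n)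
        = symb (Complex.exp ((θ:ℂ) * Complex.I)) p
            (∑ m ∈ range N, Complex.exp ((m:ℂ) * (θ:ℂ) * Complex.I) • (f : ∀ _ : ℕ, E) m) := by
    intro θ
    have hexp : ∀ n : ℕ, Complex.exp ((n:ℂ) * (θ:ℂ) * Complex.I)
        = (Complex.exp ((θ:ℂ) * Complex.I)) ^ n := by
      intro n
      rw [← Complex.exp_nat_mul]
      ring_nf
    simp only [hexp]
    rw [← key_identity p _ N _ hf]
    exact Finset.sum_congr rfl fun n _ => by rw [hW f n]
  -- integrands continuous
  have hcont1 : Continuous fun θ : ℝ =>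
      (‖∑ n ∈ range (N + d), Complex.exp ((n:ℂ) * (θ:ℂ) * Complex.I) • (W f : ∀ _ : ℕ, E) n‖^2 : ℝ) := by
    apply Continuous.pow
    apply Continuous.norm
    apply continuous_finset_sum
    intro n _
    exact ((Complex.continuous_exp.comp ((continuous_const.mul Complex.continuous_ofReal).mul
      continuous_const))).smul continuous_const
  have hcont2 : Continuous fun θ : ℝ =>
      M^2 * (‖∑ n ∈ range N, Complex.exp ((n:ℂ) * (θ:ℂ) * Complex.I) • (f : ∀ _ : ℕ, E) n‖^2 : ℝ) := by
    apply Continuous.mul continuous_const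
    apply Continuous.pow
    apply Continuous.norm
    apply continuous_finset_sum
    intro n _
    exact ((Complex.continuous_exp.comp ((continuous_const.mul Complex.continuous_ofReal).mul
      continuous_const))).smul continuous_const
  have hmono : (∫ θ in (0:ℝ)..(2*π),
      (‖∑ n ∈ range (N + d), Complex.exp ((n:ℂ) * (θ:ℂ) * Complex.I) • (W f : ∀ _ : ℕ, E) n‖^2 : ℝ))
      ≤ ∫ θ in (0:ℝ)..(2*π),
        M^2 * (‖∑ n ∈ range N, Complex.exp ((n:ℂ) * (θ:ℂ) * Complex.I) • (f : ∀ _ : ℕ, E) n‖^2 : ℝ) := by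
    apply intervalIntegral.integral_mono_on (by positivity)
      (hcont1.intervalIntegrable _ _) (hcont2.intervalIntegrable _ _)
    intro θ _
    rw [hpoint θ]
    have hb : ‖symb (Complex.exp ((θ:ℂ) * Complex.I)) p
        (∑ m ∈ range N, Complex.exp ((m:ℂ) * (θ:ℂ) * Complex.I) • (f : ∀ _ : ℕ, E) m)‖
        ≤ M * ‖∑ m ∈ range N, Complex.exp ((m:ℂ) * (θ:ℂ) * Complex.I) • (f : ∀ _ : ℕ, E) m‖ := by
      refine le_trans (ContinuousLinearMap.le_opNorm _ _) ?_
      exact mul_le_mul_of_nonneg_right (hM _ (hzexp θ)) (norm_nonneg _)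
    calc ‖symb (Complex.exp ((θ:ℂ) * Complex.I)) p _‖^2
        ≤ (M * ‖∑ m ∈ range N, Complex.exp ((m:ℂ) * (θ:ℂ) * Complex.I) • (f : ∀ _ : ℕ, E) m‖)^2 :=
          pow_le_pow_left₀ (norm_nonneg _) hb 2
      _ = M^2 * ‖∑ m ∈ range N, Complex.exp ((m:ℂ) * (θ:ℂ) * Complex.I) • (f : ∀ _ : ℕ, E) m‖^2 := by
          ring
  rw [par1, intervalIntegral.integral_const_mul, par2] at hmono
  -- 2π ‖Wf‖² ≤ M² 2π ‖f‖²
  rw [← hWsq] at hmono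
  rw [← hfsq] at hmono
  have hpi : (0:ℝ) < 2 * π := by positivity
  have hsq : ‖W f‖^2 ≤ (M * ‖f‖)^2 := by
    nlinarith [hmono]
  exact (pow_le_pow_iff_left₀ (norm_nonneg _) (mul_nonneg hM0 (norm_nonneg _)) two_ne_zero).1 hsq

theorem toeprep_norm_le (p : Polynomial (E →L[ℂ] E)) (W)
    (hW : ToepRep p W) :
    ‖W‖ ≤ ⨆ z : {w : ℂ // ‖w‖ = 1}, ‖symb (z : ℂ) p‖ := by
  have hne : Nonempty {w : ℂ // ‖w‖ = 1} := ⟨⟨1, by simp⟩⟩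
  set M := ⨆ z : {w : ℂ // ‖w‖ = 1}, ‖symb (z : ℂ) p‖ with hMdef
  have hMz : ∀ z : ℂ, ‖z‖ = 1 → ‖symb z p‖ ≤ M := by
    intro z hz
    exact le_ciSup (bdd_symb p) (⟨z, hz⟩ : {w : ℂ // ‖w‖ = 1})
  have hM0 : 0 ≤ M := le_trans (norm_nonneg _) (hMz 1 (by simp))
  refine ContinuousLinearMap.opNorm_le_bound W hM0 fun f => ?_
  have hsum := lp.hasSum_single (E := fun _ : ℕ => E) (p := 2) (by norm_num) f
  have htend := hsum.tendsto_sum_nat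
  set fN : ℕ → lp (fun _ : ℕ => E) 2 := fun N => ∑ i ∈ range N, lp.single 2 i ((f : ∀ _ : ℕ, E) i)
    with hfNdef
  have hfN : ∀ N n, N ≤ n → ((fN N : lp (fun _ : ℕ => E) 2) : ∀ _ : ℕ, E) n = 0 := by
    intro N n hn
    rw [hfNdef]
    simp only [lp.coeFn_sum, Finset.sum_apply]
    apply Finset.sum_eq_zero
    intro i hi
    rw [Finset.mem_range] at hi
    exact lp.single_apply_ne 2 i _ (by omega)
  have step : ∀ N, ‖W (fN N)‖ ≤ M * ‖fN N‖ := fun N =>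
    norm_apply_le_of_finsupp p W hW M hM0 hMz (fN N) N (hfN N)
  have h1 : Tendsto (fun N => ‖W (fN N)‖) atTop (𝓝 ‖W f‖) :=
    ((W.continuous.tendsto f).comp htend).norm
  have h2 : Tendsto (fun N => M * ‖fN N‖) atTop (𝓝 (M * ‖f‖)) :=
    (htend.norm).const_mul M
  exact le_of_tendsto_of_tendsto' h1 h2 step

end S4

theorem toeprep_of_isToeplitz {E : Type*} [NormedAddCommGroup E] [InnerProductSpace ℂ E]
    (a b : E →L[ℂ] E) (W : lp (fun _ : ℕ => E) 2 →L[ℂ] lp (fun _ : ℕ => E) 2)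
    (h : IsToeplitz a b W) :
    ToepRep (Polynomial.C a + Polynomial.C b * Polynomial.X) W := by
  set q : Polynomial (E →L[ℂ] E) := Polynomial.C a + Polynomial.C b * Polynomial.X with hq
  have hc0 : q.coeff 0 = a := by simp [hq]
  have hc1 : q.coeff 1 = b := by simp [hq]
  have hck : ∀ k, 2 ≤ k → q.coeff k = 0 := by
    intro k hk
    have h0 : k ≠ 0 := by omega
    have h1 : ¬(1 = k) := by omega
    simp [hq, Polynomial.coeff_add, Polynomial.coeff_C, Polynomial.coeff_C_mul,
      Polynomial.coeff_X, h0, h1]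
  intro f n
  cases n with
  | zero =>
    rw [(h f).1]
    simp [hc0]
  | succ n =>
    rw [(h f).2 n]
    have hterm : ∀ k ∈ range (n + 1 + 1),
        q.coeff k ((f : ∀ _ : ℕ, E) (n + 1 - k))
          = (if k = 0 then a ((f : ∀ _ : ℕ, E) (n + 1)) else 0)
            + (if k = 1 then b ((f : ∀ _ : ℕ, E) n) else 0) := by
      intro k _
      rcases Nat.lt_or_ge k 2 with hk2 | hk2
      · interval_cases k
        · simp [hc0]
        · simp [hc1]
      · rw [hck k hk2]
        have h0 : k ≠ 0 := by omega
        have h1 : k ≠ 1 := by omega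
        simp [h0, h1]
    rw [Finset.sum_congr rfl hterm, Finset.sum_add_distrib,
      Finset.sum_ite_eq' (range (n + 1 + 1)) 0, Finset.sum_ite_eq' (range (n + 1 + 1)) 1]
    simp [Finset.mem_range]

/-- von Neumann inequality over the boundary for the Berger–Coburn–Lebow pair: for the
commuting isometries `W_Φ, W_Ψ` on `ℓ²(ℕ, E)` with symbols `Φ(z) = (P + z(I−P)) U*` and
`Ψ(z) = U((I−P) + z P)` (with `E` nonzero finite dimensional), every polynomial expression
satisfies `‖∑ c(i,j) W_Φ^i W_Ψ^j‖ ≤ sup_{|z|=1} ‖∑ c(i,j) Φ(z)^i Ψ(z)^j‖`. -/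
theorem bcl_von_neumann_boundary
    {E : Type*} [NormedAddCommGroup E] [InnerProductSpace ℂ E]
    [Nontrivial E] [FiniteDimensional ℂ E]
    (U P : E →L[ℂ] E)
    (hU₁ : adjoint U * U = 1) (hU₂ : U * adjoint U = 1)
    (hP₁ : IsSelfAdjoint P) (hP₂ : P * P = P)
    (WΦ WΨ : lp (fun _ : ℕ => E) 2 →L[ℂ] lp (fun _ : ℕ => E) 2)
    (hWΦ : IsToeplitz (P ∘L adjoint U) ((1 - P) ∘L adjoint U) WΦ)
    (hWΨ : IsToeplitz (U ∘L (1 - P)) (U ∘L P) WΨ)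
    (c : (ℕ × ℕ) →₀ ℂ) :
    ‖c.sum fun p coeff => coeff • (WΦ ^ p.1 * WΨ ^ p.2)‖ ≤
      ⨆ z : {w : ℂ // ‖w‖ = 1},
        ‖c.sum fun p coeff =>
          coeff • (((P + (z : ℂ) • (1 - P)) * adjoint U) ^ p.1 *
            (U * ((1 - P) + (z : ℂ) • P)) ^ p.2)‖ := by
  set pΦ : Polynomial (E →L[ℂ] E) :=
    Polynomial.C (P ∘L adjoint U) + Polynomial.C ((1 - P) ∘L adjoint U) * Polynomial.X with hpΦ
  set pΨ : Polynomial (E →L[ℂ] E) :=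
    Polynomial.C (U ∘L (1 - P)) + Polynomial.C (U ∘L P) * Polynomial.X with hpΨ
  have hrepΦ : ToepRep pΦ WΦ := toeprep_of_isToeplitz _ _ _ hWΦ
  have hrepΨ : ToepRep pΨ WΨ := toeprep_of_isToeplitz _ _ _ hWΨ
  set pbig : Polynomial (E →L[ℂ] E) :=
    ∑ i ∈ c.support, (c i) • (pΦ ^ i.1 * pΨ ^ i.2) with hpbig
  have hrep : ToepRep pbig (c.sum fun p coeff => coeff • (WΦ ^ p.1 * WΨ ^ p.2)) := by
    rw [Finsupp.sum]
    exact toeprep_finset_sum _ _ _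
      (fun i _ => toeprep_smul _ (toeprep_mul (toeprep_pow hrepΦ i.1) (toeprep_pow hrepΨ i.2)))
  have hsymbΦ : ∀ z : ℂ, symb z pΦ = (P + z • (1 - P)) * adjoint U := by
    intro z
    rw [hpΦ, symb_linear]
    rw [add_mul, smul_mul_assoc]
    rfl
  have hsymbΨ : ∀ z : ℂ, symb z pΨ = U * ((1 - P) + z • P) := by
    intro z
    rw [hpΨ, symb_linear]
    rw [mul_add, mul_smul_comm]
    rfl
  refine le_trans (toeprep_norm_le pbig _ hrep) (le_of_eq (iSup_congr fun z => ?_))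
  congr 1
  rw [hpbig, map_sum, Finsupp.sum]
  refine Finset.sum_congr rfl fun i _ => ?_
  rw [symb_smul, map_mul, map_pow, map_pow, hsymbΦ, hsymbΨ]
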